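/- Let V : (0,∞) → (0,∞) be non-decreasing such that M(r) = V(r)²/r² is non-increasing and lim_{r→0⁺} M(r) = ∞. Let D ⊂ ℝ be a finite union of k disjoint bounded open intervals, δ_z = dist(z, Dᶜ), and let b : ℝ → ℝ be measurable satisfying the Kato condition lim_{r→0⁺} sup_{x∈ℝ} ∫_{B(x,r)} M(|x−z|) |b(z)| dz = 0. Let g : ℝ × ℝ → ℝ be measurable with g(z,y) = 0 for z ∉ D and |g(z,y)| ≤ A · M( δ_z ∧ |z−y| ) for all z ∈ D, y ∈ ℝ, for some constant A. Then lim_{N→∞} sup_{y∈ℝ} ∫_{{z : |g(z,y)| > N}} |g(z,y)| |b(z)| dz = 0; i.e., g(·,y) is uniformly in y integrable against |b(z)|dz. -/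

import Mathlib

open MeasureTheory Metric Filter Topology
open scoped ENNReal

/-- Uniform integrability against |b(z)|dz: if |g(z,y)| ≤ A·M(δ_z ∧ |z−y|)
on D (with g vanishing off D), M = V²/r² non-increasing blowing up at 0, and b is in the
Kato class for M, then lim_{N→∞} sup_y ∫_{|g(·,y)|>N} |g(z,y)||b(z)| dz = 0. -/
theorem statement13 (V M : ℝ → ℝ)
    (hVpos : ∀ r : ℝ, 0 < r → 0 < V r)
    (hVmono : ∀ r s : ℝ, 0 < r → r ≤ s → V r ≤ V s)
    (hM : ∀ r : ℝ, 0 < r → M r = V r ^ 2 / r ^ 2)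
    (hMdec : ∀ r s : ℝ, 0 < r → r ≤ s → M s ≤ M r)
    (hMtop : Tendsto M (𝓝[>] 0) atTop)
    (k : ℕ) (p q : Fin k → ℝ) (hpq : ∀ i, p i < q i)
    (hdisj : ∀ i j : Fin k, i < j → q i ≤ p j)
    (D : Set ℝ) (hD : D = ⋃ i, Set.Ioo (p i) (q i))
    (b : ℝ → ℝ) (hb : Measurable b)
    (hKato : Tendsto (fun r : ℝ => ⨆ x : ℝ, ∫⁻ z in Set.Ioo (x - r) (x + r),
        ENNReal.ofReal (M |x - z| * |b z|)) (𝓝[>] 0) (𝓝 0))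
    (g : ℝ → ℝ → ℝ) (hgmeas : Measurable (Function.uncurry g))
    (A : ℝ)
    (hg0 : ∀ z y : ℝ, z ∉ D → g z y = 0)
    (hgbd : ∀ z ∈ D, ∀ y : ℝ, z ≠ y →
      |g z y| ≤ A * M (min (infDist z Dᶜ) |z - y|)) :
    Tendsto (fun N : ℝ => ⨆ y : ℝ, ∫⁻ z in {z : ℝ | N < |g z y|},
        ENNReal.ofReal (|g z y| * |b z|)) atTop (𝓝 0) := by
  classical
  -- positivity of M on (0,∞)
  have hMpos : ∀ r : ℝ, 0 < r → 0 < M r := by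
    intro r hr
    rw [hM r hr]
    exact div_pos (pow_pos (hVpos r hr) 2) (pow_pos hr 2)
  set A' : ℝ := max A 1 with hA'def
  have hA'pos : (0:ℝ) < A' := lt_of_lt_of_le one_pos (le_max_right _ _)
  -- improved bound with positive constant
  have hgbd' : ∀ z ∈ D, ∀ y : ℝ, z ≠ y → 0 < min (infDist z Dᶜ) |z - y| →
      |g z y| ≤ A' * M (min (infDist z Dᶜ) |z - y|) := by
    intro z hz y hzy hpos
    exact (hgbd z hz y hzy).trans
      (mul_le_mul_of_nonneg_right (le_max_left _ _) (hMpos _ hpos).le)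
  -- endpoints are not in D
  have hend : ∀ i : Fin k, p i ∉ D ∧ q i ∉ D := by
    intro i
    rw [hD]
    constructor
    · intro hmem
      obtain ⟨j, hj⟩ := Set.mem_iUnion.1 hmem
      rcases lt_trichotomy i j with h | h | h
      · have := hdisj i j h
        have := hpq i
        have := hj.1
        linarith
      · subst h; exact lt_irrefl _ hj.1
      · have := hdisj j i h
        have := hj.2
        linarith
    · intro hmem
      obtain ⟨j, hj⟩ := Set.mem_iUnion.1 hmem
      rcases lt_trichotomy i j with h | h | h
      · have := hdisj i j h
        have := hj.1
        linarith
      · subst h; exact lt_irrefl _ hj.2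
      · have := hdisj j i h
        have := hpq i
        have := hj.2
        linarith
  -- lower bound on distance to the complement
  have hinf : ∀ i : Fin k, ∀ z ∈ Set.Ioo (p i) (q i),
      min (z - p i) (q i - z) ≤ infDist z Dᶜ := by
    intro i z hz
    have hcne : (Dᶜ : Set ℝ).Nonempty := ⟨p i, (hend i).1⟩
    by_contra hcon
    push_neg at hcon
    obtain ⟨w, hw, hwd⟩ := (infDist_lt_iff hcne).1 hcon
    have hwD : w ∉ Set.Ioo (p i) (q i) := by
      intro hwIoo
      exact hw (hD ▸ Set.mem_iUnion.2 ⟨i, hwIoo⟩)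
    rw [Set.mem_Ioo, not_and_or, not_lt, not_lt] at hwD
    rw [Real.dist_eq] at hwd
    rcases hwD with h | h
    · have h1 : z - p i ≤ |z - w| := le_trans (by linarith) (le_abs_self _)
      have := min_le_left (z - p i) (q i - z)
      linarith
    · have h1 : q i - z ≤ |z - w| := le_trans (by linarith) (neg_le_abs _)
      have := min_le_right (z - p i) (q i - z)
      linarith
  -- extended (measurable) version of M with values in ℝ≥0∞
  set Me : ℝ → ℝ≥0∞ := fun r => if r ≤ 0 then ⊤ else ENNReal.ofReal (M r) with hMedef
  have hMeanti : Antitone Me := by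
    intro a c hac
    simp only [hMedef]
    by_cases hc : c ≤ 0
    · have ha : a ≤ 0 := hac.trans hc
      simp [ha, hc]
    · by_cases ha : a ≤ 0
      · simp [ha]
      · push_neg at ha hc
        simp only [not_le.2 ha, not_le.2 hc, if_false]
        exact ENNReal.ofReal_le_ofReal (hMdec a c ha hac)
  have hMemeas : Measurable Me := hMeanti.measurable
  have hMeval : ∀ r : ℝ, 0 < r → Me r = ENNReal.ofReal (M r) := by
    intro r hr; simp [hMedef, not_le.2 hr]
  -- the comparison functions
  set f : ℝ → ℝ → ℝ≥0∞ := fun x z => Me |x - z| * ENNReal.ofReal |b z| with hfdef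
  have hfmeas : ∀ x : ℝ, Measurable (f x) := by
    intro x
    exact (hMemeas.comp ((measurable_const.sub measurable_id).abs)).mul
      (ENNReal.measurable_ofReal.comp hb.abs)
  have hne_ae : ∀ x : ℝ, ∀ᵐ z : ℝ, z ≠ x := by
    intro x
    rw [ae_iff]
    have : {z : ℝ | ¬z ≠ x} = {x} := by ext z; simp [eq_comm]
    rw [this]
    exact measure_singleton x
  -- the set-integral of f x over the ball equals the Kato integrand
  have hSf : ∀ r x : ℝ, ∫⁻ z in Set.Ioo (x - r) (x + r), f x z
      = ∫⁻ z in Set.Ioo (x - r) (x + r), ENNReal.ofReal (M |x - z| * |b z|) := by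
    intro r x
    refine lintegral_congr_ae (ae_restrict_of_ae ?_)
    filter_upwards [hne_ae x] with z hz
    have hpos : 0 < |x - z| := abs_pos.2 (sub_ne_zero.2 (Ne.symm hz))
    rw [hfdef]
    simp only
    rw [hMeval _ hpos, ← ENNReal.ofReal_mul (hMpos _ hpos).le]
  set T : ℝ → ℝ≥0∞ := fun r => ⨆ x : ℝ, ∫⁻ z in Set.Ioo (x - r) (x + r),
      ENNReal.ofReal (M |x - z| * |b z|) with hTdef
  have hfT : ∀ r x : ℝ, ∫⁻ z in Set.Ioo (x - r) (x + r), f x z ≤ T r := by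
    intro r x
    rw [hSf r x]
    exact le_iSup (fun x => ∫⁻ z in Set.Ioo (x - r) (x + r),
      ENNReal.ofReal (M |x - z| * |b z|)) x
  -- the key estimate
  have key : ∀ r : ℝ, 0 < r → ∀ N : ℝ, A' * M r ≤ N → ∀ y : ℝ,
      (∫⁻ z in {z : ℝ | N < |g z y|}, ENNReal.ofReal (|g z y| * |b z|))
        ≤ ENNReal.ofReal A' * (((2 * k + 1 : ℕ) : ℝ≥0∞) * T r) := by
    intro r hr N hN y
    have hNpos : 0 < N := lt_of_lt_of_le (mul_pos hA'pos (hMpos r hr)) hN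
    have hbadmeas : MeasurableSet {z : ℝ | N < |g z y|} := by
      have : Measurable fun z : ℝ => g z y :=
        hgmeas.comp (measurable_id.prodMk measurable_const)
      exact measurableSet_lt measurable_const this.abs
    -- the dominating function
    set h : ℝ → ℝ≥0∞ := fun z => ENNReal.ofReal A' *
      ((Set.Ioo (y - r) (y + r)).indicator (f y) z +
        ∑ i : Fin k, ((Set.Ioo (p i - r) (p i + r)).indicator (f (p i)) z +
          (Set.Ioo (q i - r) (q i + r)).indicator (f (q i)) z)) with hhdef
    have step1 : (∫⁻ z in {z : ℝ | N < |g z y|}, ENNReal.ofReal (|g z y| * |b z|))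
        ≤ ∫⁻ z, h z := by
      refine le_trans (lintegral_mono_ae ?_) (setLIntegral_le_lintegral _ _)
      filter_upwards [ae_restrict_mem hbadmeas, ae_restrict_of_ae (hne_ae y)]
        with z hz_bad hz_ne
      -- z is in the bad set and z ≠ y
      have hz_bad' : N < |g z y| := hz_bad
      have hzD : z ∈ D := by
        by_contra h0
        rw [hg0 z y h0, abs_zero] at hz_bad'
        linarith
      obtain ⟨i, hzi⟩ := Set.mem_iUnion.1 (hD ▸ hzD)
      have hzi' := hzi
      rw [Set.mem_Ioo] at hzi'
      have hδpos : 0 < infDist z Dᶜ :=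
        lt_of_lt_of_le (lt_min (by linarith) (by linarith)) (hinf i z hzi)
      have hty : 0 < |z - y| := abs_pos.2 (sub_ne_zero.2 hz_ne)
      set d := min (infDist z Dᶜ) |z - y| with hddef
      have hdpos : 0 < d := lt_min hδpos hty
      have hgle : |g z y| ≤ A' * M d := hgbd' z hzD y hz_ne hdpos
      have hdr : d < r := by
        by_contra hc
        push_neg at hc
        have h1 : M d ≤ M r := hMdec r d hr hc
        have h2 : |g z y| ≤ A' * M r :=
          hgle.trans (mul_le_mul_of_nonneg_left h1 hA'pos.le)
        linarith
      -- helper: if nearby point e works, get the bound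
      have hstep : ∀ e : ℝ, 0 < |e - z| → |e - z| < r → |g z y| ≤ A' * M |e - z| →
          ENNReal.ofReal (|g z y| * |b z|) ≤ ENNReal.ofReal A' * f e z
            ∧ z ∈ Set.Ioo (e - r) (e + r) := by
        intro e hepos her hge
        constructor
        · have h1 : |g z y| * |b z| ≤ A' * M |e - z| * |b z| :=
            mul_le_mul_of_nonneg_right hge (abs_nonneg _)
          refine (ENNReal.ofReal_le_ofReal h1).trans ?_
          rw [mul_assoc, ENNReal.ofReal_mul hA'pos.le,
            ENNReal.ofReal_mul (hMpos _ hepos).le, hfdef]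
          simp only
          rw [hMeval _ hepos]
        · have := abs_lt.1 her
          constructor <;> [linarith [this.1]; linarith [this.2]]
      rcases le_total |z - y| (infDist z Dᶜ) with hcase | hcase
      · -- nearest point is y
        have hdy : d = |z - y| := min_eq_right hcase
        have h1 : 0 < |y - z| := by rw [abs_sub_comm]; exact hty
        have h2 : |y - z| < r := by rw [abs_sub_comm]; rw [hdy] at hdr; exact hdr
        have h3 : |g z y| ≤ A' * M |y - z| := by
          rw [abs_sub_comm y z, ← hdy]; exact hgle
        obtain ⟨hle, hmem⟩ := hstep y h1 h2 h3
        refine hle.trans ?_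
        rw [hhdef]
        refine mul_le_mul_right ?_ _
        rw [Set.indicator_of_mem hmem]
        exact le_self_add
      · -- nearest point is an endpoint of the interval containing z
        have hdδ : d = infDist z Dᶜ := min_eq_left hcase
        have hminle : min (z - p i) (q i - z) ≤ d := hdδ ▸ hinf i z hzi
        rcases le_total (z - p i) (q i - z) with hside | hside
        · -- left endpoint
          have hple : z - p i ≤ d := by
            rw [min_eq_left hside] at hminle; exact hminle
          have h1 : 0 < |p i - z| := by
            rw [abs_sub_comm, abs_of_pos (by linarith [hzi'.1] : (0:ℝ) < z - p i)]
            linarith [hzi'.1]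
          have habs : |p i - z| = z - p i := by
            rw [abs_sub_comm, abs_of_pos (by linarith [hzi'.1] : (0:ℝ) < z - p i)]
          have h2 : |p i - z| < r := by rw [habs]; linarith
          have h3 : |g z y| ≤ A' * M |p i - z| := by
            refine hgle.trans (mul_le_mul_of_nonneg_left ?_ hA'pos.le)
            exact hMdec _ _ (by rw [habs]; linarith [hzi'.1]) (by rw [habs]; linarith)
          obtain ⟨hle, hmem⟩ := hstep (p i) h1 h2 h3
          refine hle.trans ?_
          rw [hhdef]
          refine mul_le_mul_right ?_ _
          calc f (p i) z = (Set.Ioo (p i - r) (p i + r)).indicator (f (p i)) z := by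
                rw [Set.indicator_of_mem hmem]
            _ ≤ (Set.Ioo (p i - r) (p i + r)).indicator (f (p i)) z +
                (Set.Ioo (q i - r) (q i + r)).indicator (f (q i)) z := le_self_add
            _ ≤ ∑ j : Fin k, ((Set.Ioo (p j - r) (p j + r)).indicator (f (p j)) z +
                (Set.Ioo (q j - r) (q j + r)).indicator (f (q j)) z) :=
                Finset.single_le_sum (f := fun j : Fin k =>
                  (Set.Ioo (p j - r) (p j + r)).indicator (f (p j)) z +
                  (Set.Ioo (q j - r) (q j + r)).indicator (f (q j)) z)
                  (fun j _ => zero_le) (Finset.mem_univ i)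
            _ ≤ _ := le_add_self
        · -- right endpoint
          have hqle : q i - z ≤ d := by
            rw [min_eq_right hside] at hminle; exact hminle
          have habs : |q i - z| = q i - z :=
            abs_of_pos (by linarith [hzi'.2] : (0:ℝ) < q i - z)
          have h1 : 0 < |q i - z| := by rw [habs]; linarith [hzi'.2]
          have h2 : |q i - z| < r := by rw [habs]; linarith
          have h3 : |g z y| ≤ A' * M |q i - z| := by
            refine hgle.trans (mul_le_mul_of_nonneg_left ?_ hA'pos.le)
            exact hMdec _ _ (by rw [habs]; linarith [hzi'.2]) (by rw [habs]; linarith)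
          obtain ⟨hle, hmem⟩ := hstep (q i) h1 h2 h3
          refine hle.trans ?_
          rw [hhdef]
          refine mul_le_mul_right ?_ _
          calc f (q i) z = (Set.Ioo (q i - r) (q i + r)).indicator (f (q i)) z := by
                rw [Set.indicator_of_mem hmem]
            _ ≤ (Set.Ioo (p i - r) (p i + r)).indicator (f (p i)) z +
                (Set.Ioo (q i - r) (q i + r)).indicator (f (q i)) z := le_add_self
            _ ≤ ∑ j : Fin k, ((Set.Ioo (p j - r) (p j + r)).indicator (f (p j)) z +
                (Set.Ioo (q j - r) (q j + r)).indicator (f (q j)) z) :=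
                Finset.single_le_sum (f := fun j : Fin k =>
                  (Set.Ioo (p j - r) (p j + r)).indicator (f (p j)) z +
                  (Set.Ioo (q j - r) (q j + r)).indicator (f (q j)) z)
                  (fun j _ => zero_le) (Finset.mem_univ i)
            _ ≤ _ := le_add_self
    -- now estimate ∫⁻ h
    have hindmeas : ∀ x : ℝ,
        Measurable ((Set.Ioo (x - r) (x + r)).indicator (f x)) := fun x =>
      (hfmeas x).indicator measurableSet_Ioo
    have step2 : (∫⁻ z, h z) ≤ ENNReal.ofReal A' * (((2 * k + 1 : ℕ) : ℝ≥0∞) * T r) := by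
      rw [hhdef]
      simp only
      rw [lintegral_const_mul' _ _ ENNReal.ofReal_ne_top]
      refine mul_le_mul_right ?_ _
      rw [lintegral_add_left (hindmeas y)]
      rw [lintegral_finset_sum (f := fun i z => (Set.Ioo (p i - r) (p i + r)).indicator (f (p i)) z +
        (Set.Ioo (q i - r) (q i + r)).indicator (f (q i)) z) _ (fun i _ => ((hindmeas (p i)).add (hindmeas (q i))))]
      have hterm : ∀ x : ℝ,
          (∫⁻ z, (Set.Ioo (x - r) (x + r)).indicator (f x) z) ≤ T r := by
        intro x
        rw [lintegral_indicator measurableSet_Ioo]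
        exact hfT r x
      calc (∫⁻ z, (Set.Ioo (y - r) (y + r)).indicator (f y) z) +
            ∑ i : Fin k, (∫⁻ z, ((Set.Ioo (p i - r) (p i + r)).indicator (f (p i)) z +
              (Set.Ioo (q i - r) (q i + r)).indicator (f (q i)) z))
          ≤ T r + ∑ i : Fin k, (T r + T r) := by
            refine add_le_add (hterm y) (Finset.sum_le_sum fun i _ => ?_)
            rw [lintegral_add_left (hindmeas (p i))]
            exact add_le_add (hterm (p i)) (hterm (q i))
        _ = ((2 * k + 1 : ℕ) : ℝ≥0∞) * T r := by
            rw [Finset.sum_const, Finset.card_univ, Fintype.card_fin, nsmul_eq_mul]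
            push_cast
            ring
    exact step1.trans step2
  -- conclude using the Kato condition
  rw [ENNReal.tendsto_nhds_zero]
  intro ε hε
  set C : ℝ≥0∞ := ENNReal.ofReal A' * ((2 * k + 1 : ℕ) : ℝ≥0∞) with hCdef
  have hCtop : C ≠ ⊤ :=
    ENNReal.mul_ne_top ENNReal.ofReal_ne_top (ENNReal.natCast_ne_top _)
  set η : ℝ≥0∞ := ε / C with hηdef
  have hη : 0 < η := ENNReal.div_pos hε.ne' hCtop
  have hev : ∀ᶠ r in 𝓝[>] (0:ℝ), T r < η := hKato.eventually (gt_mem_nhds hη)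
  obtain ⟨r, hrT, hrpos⟩ := (hev.and self_mem_nhdsWithin).exists
  filter_upwards [eventually_ge_atTop (A' * M r)] with N hN
  refine iSup_le fun y => ?_
  refine (key r hrpos N hN y).trans ?_
  calc ENNReal.ofReal A' * (((2 * k + 1 : ℕ) : ℝ≥0∞) * T r) = C * T r := by
        rw [hCdef, mul_assoc]
    _ ≤ C * η := mul_le_mul_right hrT.le _
    _ = C * (ε / C) := by rw [hηdef]
    _ ≤ ε := ENNReal.mul_div_le
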